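/- Let K ≥ 2 be an integer. Define the sequence A_{K−i}(K) for 0 ≤ i ≤ K−2 by the recursion A_{K−i}(K) = (i/((K−i)(2i+1)))·[(K−i−1)·A_{K−i+1}(K) + (K−i)/(K−i+1)] for 1 ≤ i ≤ K−2 with initial condition A_K(K) = 0. Then the closed-form A_{K−i}(K) = −i(i−1)/(2(4i²−1)(K−i)) + ∑_{ℓ=0}^{i−1} [(i−ℓ+1)(3ℓ²+ℓ−1)/(2(K−ℓ)(4ℓ²−1))]·∏_{j=ℓ+1}^{i} j/(2j+1) holds for all 0 ≤ i ≤ K−2. -/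

import Mathlib

set_option maxHeartbeats 1000000
open Finset

lemma ne4 (l : ℕ) : (4 * (l:ℝ)^2 - 1) ≠ 0 := by
  rcases Nat.eq_zero_or_pos l with h | h
  · subst h; norm_num
  · have : (1:ℝ) ≤ l := by exact_mod_cast h
    nlinarith

lemma auxT (n : ℕ) :
    ∑ ℓ ∈ Finset.range n, (3*(ℓ:ℝ)^2 + (ℓ:ℝ) - 1) / (2*(4*(ℓ:ℝ)^2 - 1)) *
      ∏ j ∈ Finset.Icc (ℓ+1) n, (j:ℝ)/(2*(j:ℝ)+1)
    = (n:ℝ)*(3*(n:ℝ)-2)/(2*(4*(n:ℝ)^2-1)) := by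
  induction n with
  | zero => simp
  | succ n ih =>
    rw [Finset.sum_range_succ, Finset.sum_congr rfl (fun ℓ hℓ => by
      have hl := Finset.mem_range.mp hℓ
      rw [Finset.prod_Icc_succ_top (by omega : ℓ + 1 ≤ n + 1), ← mul_assoc]),
      ← Finset.sum_mul, ih, Finset.Icc_self, Finset.prod_singleton]
    have h1 := ne4 n
    have h2 := ne4 (n+1)
    have h3 : (2*(n:ℝ)+1) ≠ 0 := by positivity
    push_cast at h2 ⊢
    have h1'' : (n:ℝ)^2*4 - 1 ≠ 0 := by rw [mul_comm]; exact h1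
    field_simp
    ring

theorem stmt_11 (K : ℕ) (hK : 2 ≤ K) (A : ℕ → ℝ)
    (h0 : A 0 = 0)
    (hrec : ∀ i : ℕ, 1 ≤ i → i ≤ K - 2 →
      A i = ((i : ℝ) / (((K : ℝ) - i) * (2 * (i : ℝ) + 1))) *
        (((K : ℝ) - i - 1) * A (i - 1) + ((K : ℝ) - i) / ((K : ℝ) - i + 1))) :
    ∀ i : ℕ, i ≤ K - 2 →
      A i = -((i : ℝ) * ((i : ℝ) - 1)) / (2 * (4 * (i : ℝ) ^ 2 - 1) * ((K : ℝ) - i))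
        + ∑ ℓ ∈ Finset.range i,
            ((i : ℝ) - ℓ + 1) * (3 * (ℓ : ℝ) ^ 2 + ℓ - 1) /
              (2 * ((K : ℝ) - ℓ) * (4 * (ℓ : ℝ) ^ 2 - 1)) *
            ∏ j ∈ Finset.Icc (ℓ + 1) i, (j : ℝ) / (2 * j + 1) := by
  intro i
  induction i with
  | zero => intro _; simp [h0]
  | succ n ih =>
    intro hi
    have hi' : n ≤ K - 2 := le_trans (Nat.le_succ n) hi
    have hAn := ih hi'
    have hA := hrec (n+1) (by omega) hi
    simp only [Nat.add_sub_cancel] at hA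
    have hK3 : (n:ℝ) + 3 ≤ (K:ℝ) := by exact_mod_cast (by omega : n + 3 ≤ K)
    have h1 : ((K:ℝ) - ↑n - 1) ≠ 0 := by linarith
    have h1' : ((K:ℝ) - (↑n + 1)) ≠ 0 := by linarith
    have h2 : ((K:ℝ) - ↑n) ≠ 0 := by linarith
    have h3 : (2*(n:ℝ)+1) ≠ 0 := by positivity
    have h4 : (2*(n:ℝ)+3) ≠ 0 := by positivity
    have h4' : (2*((n:ℝ)+1)+1) ≠ 0 := by positivity
    have h5 := ne4 n
    have h6 : (4*((n:ℝ)+1)^2-1) ≠ 0 := by have := ne4 (n+1); push_cast at this; exact this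
    have hcongr : (∑ ℓ ∈ Finset.range n,
        (↑(n+1) - (ℓ:ℝ) + 1) * (3*(ℓ:ℝ)^2 + ↑ℓ - 1) / (2*((K:ℝ)-↑ℓ)*(4*(ℓ:ℝ)^2-1)) *
          ∏ j ∈ Finset.Icc (ℓ+1) (n+1), (j:ℝ)/(2*(j:ℝ)+1))
      = ∑ ℓ ∈ Finset.range n,
        ((↑(n+1) - (ℓ:ℝ) + 1) * (3*(ℓ:ℝ)^2 + ↑ℓ - 1) / (2*((K:ℝ)-↑ℓ)*(4*(ℓ:ℝ)^2-1)) *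
          ∏ j ∈ Finset.Icc (ℓ+1) n, (j:ℝ)/(2*(j:ℝ)+1)) * ((↑(n+1):ℝ)/(2*(↑(n+1):ℝ)+1)) := by
      refine Finset.sum_congr rfl fun ℓ hℓ => ?_
      have hl := Finset.mem_range.mp hℓ
      rw [Finset.prod_Icc_succ_top (by omega : ℓ + 1 ≤ n + 1), ← mul_assoc]
    rw [hA, hAn, Finset.sum_range_succ, hcongr, Finset.Icc_self, Finset.prod_singleton]
    have hS : ∑ ℓ ∈ Finset.range n,
        ((↑(n+1):ℝ) - ↑ℓ + 1) * (3 * (ℓ:ℝ)^2 + ↑ℓ - 1) /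
            (2 * ((K:ℝ) - ↑ℓ) * (4 * (ℓ:ℝ)^2 - 1)) *
          (∏ j ∈ Finset.Icc (ℓ+1) n, (j:ℝ)/(2*(j:ℝ)+1)) * ((↑(n+1):ℝ) / (2*(↑(n+1):ℝ)+1))
      = ((↑(n+1):ℝ) / (((K:ℝ) - ↑(n+1)) * (2 * (↑(n+1):ℝ) + 1))) *
          (((K:ℝ) - ↑(n+1) - 1) *
            ∑ ℓ ∈ Finset.range n, ((n:ℝ) - ↑ℓ + 1) * (3 * (ℓ:ℝ)^2 + ↑ℓ - 1) /
                (2 * ((K:ℝ) - ↑ℓ) * (4 * (ℓ:ℝ)^2 - 1)) *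
              ∏ j ∈ Finset.Icc (ℓ+1) n, (j:ℝ)/(2*(j:ℝ)+1))
        + (((n:ℝ)+1)/((2*(n:ℝ)+3)*((K:ℝ)-(n:ℝ)-1))) *
          ∑ ℓ ∈ Finset.range n, (3*(ℓ:ℝ)^2 + (ℓ:ℝ) - 1) / (2*(4*(ℓ:ℝ)^2 - 1)) *
            ∏ j ∈ Finset.Icc (ℓ+1) n, (j:ℝ)/(2*(j:ℝ)+1) := by
      rw [Finset.mul_sum, Finset.mul_sum, Finset.mul_sum, ← Finset.sum_add_distrib]
      refine Finset.sum_congr rfl fun ℓ hℓ => ?_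
      have hl := Finset.mem_range.mp hℓ
      have hKl : ((K:ℝ) - ↑ℓ) ≠ 0 := by
        have : (ℓ:ℝ) + 3 ≤ K := by exact_mod_cast (by omega : ℓ + 3 ≤ K)
        linarith
      have hl4 := ne4 ℓ
      push_cast
      field_simp
      ring
    rw [hS, auxT n]
    have hscalar : (↑(n+1):ℝ) / (((K:ℝ) - ↑(n+1)) * (2 * (↑(n+1):ℝ) + 1)) *
          (((K:ℝ) - ↑(n+1) - 1) * (-((n:ℝ) * ((n:ℝ) - 1)) / (2 * (4 * (n:ℝ) ^ 2 - 1) * ((K:ℝ) - ↑n)))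
            + ((K:ℝ) - ↑(n+1)) / ((K:ℝ) - ↑(n+1) + 1))
        = -((↑(n+1):ℝ) * ((↑(n+1):ℝ) - 1)) / (2 * (4 * (↑(n+1):ℝ) ^ 2 - 1) * ((K:ℝ) - ↑(n+1)))
          + (((n:ℝ) + 1) / ((2 * (n:ℝ) + 3) * ((K:ℝ) - ↑n - 1)) * ((n:ℝ) * (3 * (n:ℝ) - 2) / (2 * (4 * (n:ℝ) ^ 2 - 1)))
            + ((↑(n+1):ℝ) - ↑n + 1) * (3 * (n:ℝ) ^ 2 + ↑n - 1) / (2 * ((K:ℝ) - ↑n) * (4 * (n:ℝ) ^ 2 - 1)) *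
                ((↑(n+1):ℝ) / (2 * (↑(n+1):ℝ) + 1))) := by
      push_cast
      rw [show (K:ℝ) - (↑n + 1) + 1 = (K:ℝ) - ↑n from by ring,
          show (K:ℝ) - (↑n + 1) = (K:ℝ) - ↑n - 1 from by ring]
      have h5'' : (n:ℝ)^2*4 - 1 ≠ 0 := by rw [mul_comm]; exact h5
      have h6'' : ((n:ℝ)+1)^2*4 - 1 ≠ 0 := by rw [mul_comm]; exact h6
      field_simp
      ring
    linear_combination hscalar
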